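/- Let à be a real m×m matrix with N(Ã) = N(Ãᵀ), let b ∈ ℝᵐ, let b|_{R(Ã)} denote the orthogonal projection of b onto R(Ã), and assume grade(Ã, b|_{R(Ã)}) = k. Then dim(Ã·K_{k+1}(Ã, b)) = k. -/

import Mathlib

open Matrix

/-- The `i`-th Krylov subspace `K_i(A, v) = span {v, Av, …, A^{i-1} v}`. -/
noncomputable def Krylov {m : ℕ} (A : Matrix (Fin m) (Fin m) ℝ)
    (v : EuclideanSpace ℝ (Fin m)) (i : ℕ) : Submodule ℝ (EuclideanSpace ℝ (Fin m)) :=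
  Submodule.span ℝ {w | ∃ j < i, w = (A ^ j).toEuclideanLin v}

private lemma teu_mul {m : ℕ} (A B : Matrix (Fin m) (Fin m) ℝ)
    (v : EuclideanSpace ℝ (Fin m)) :
    (A * B).toEuclideanLin v = A.toEuclideanLin (B.toEuclideanLin v) := by
  simp [Matrix.toEuclideanLin_apply, Matrix.mulVec_mulVec]

private lemma ker_adjoint_eq {m : ℕ}
    (T : EuclideanSpace ℝ (Fin m) →ₗ[ℝ] EuclideanSpace ℝ (Fin m)) :
    LinearMap.ker (LinearMap.adjoint T) = (LinearMap.range T)ᗮ := by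
  ext x
  simp only [LinearMap.mem_ker, Submodule.mem_orthogonal]
  constructor
  · rintro h u ⟨y, rfl⟩
    have h1 : inner ℝ (LinearMap.adjoint T x) y = inner ℝ x (T y) :=
      LinearMap.adjoint_inner_left T y x
    rw [h, inner_zero_left] at h1
    rw [real_inner_comm]
    exact h1.symm
  · intro h
    have h1 : inner ℝ (LinearMap.adjoint T x) (LinearMap.adjoint T x)
        = inner ℝ x (T (LinearMap.adjoint T x)) :=
      LinearMap.adjoint_inner_left T (LinearMap.adjoint T x) x
    have h2 : inner ℝ x (T (LinearMap.adjoint T x)) = 0 := by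
      rw [real_inner_comm]; exact h _ ⟨_, rfl⟩
    rw [h2] at h1
    exact inner_self_eq_zero.mp h1

/-- If `N(Ã) = N(Ãᵀ)` and `grade(Ã, b|_{R(Ã)}) = k`, then
`dim (Ã · K_{k+1}(Ã, b)) = k`. -/
theorem finrank_map_krylov_succ_of_ker_eq_ker_transpose
    {m : ℕ} (A : Matrix (Fin m) (Fin m) ℝ) (b bR : EuclideanSpace ℝ (Fin m)) (k : ℕ)
    (hN : LinearMap.ker A.toEuclideanLin = LinearMap.ker Aᵀ.toEuclideanLin)
    -- `bR` is the orthogonal projection of `b` onto `R(Ã)`: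
    (hbR : bR ∈ LinearMap.range A.toEuclideanLin)
    (hperp : b - bR ∈ (LinearMap.range A.toEuclideanLin)ᗮ)
    -- `grade(Ã, b|_{R(Ã)}) = k`:
    (hgrade : Krylov A bR (k + 1) = Krylov A bR k)
    (hmin : ∀ j < k, Krylov A bR (j + 1) ≠ Krylov A bR j) :
    Module.finrank ℝ ((Krylov A b (k + 1)).map A.toEuclideanLin) = k := by
  set T := A.toEuclideanLin with hT
  have hAT : Aᵀ.toEuclideanLin = LinearMap.adjoint T := by
    rw [hT, ← Matrix.toEuclideanLin_conjTranspose_eq_adjoint]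
    congr 1
  have hker : LinearMap.ker T = (LinearMap.range T)ᗮ := by
    rw [hN, hAT, ker_adjoint_eq]
  have hTb : T b = T bR := by
    have h0 : b - bR ∈ LinearMap.ker T := by rw [hker]; exact hperp
    have h1 := LinearMap.mem_ker.mp h0
    rw [map_sub] at h1
    exact sub_eq_zero.mp h1
  -- powers commute with T
  have hpow : ∀ (j : ℕ) (v : EuclideanSpace ℝ (Fin m)),
      (A ^ (j + 1)).toEuclideanLin v = (A ^ j).toEuclideanLin (T v) := by
    intro j v
    rw [pow_succ, teu_mul]
  have hpow' : ∀ (j : ℕ) (v : EuclideanSpace ℝ (Fin m)),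
      (A ^ (j + 1)).toEuclideanLin v = T ((A ^ j).toEuclideanLin v) := by
    intro j v
    rw [pow_succ', teu_mul]
  -- image of a Krylov space
  have hmap : ∀ (v : EuclideanSpace ℝ (Fin m)) (i : ℕ),
      (Krylov A v i).map T
        = Submodule.span ℝ {w | ∃ j < i, w = (A ^ (j + 1)).toEuclideanLin v} := by
    intro v i
    rw [Krylov, Submodule.map_span]
    congr 1
    ext w
    constructor
    · rintro ⟨u, ⟨j, hj, rfl⟩, rfl⟩
      exact ⟨j, hj, (hpow' j v).symm⟩
    · rintro ⟨j, hj, rfl⟩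
      exact ⟨(A ^ j).toEuclideanLin v, ⟨j, hj, rfl⟩, (hpow' j v).symm⟩
  -- T (K_{k+1}(b)) = T (K_{k+1}(bR))
  have hbbR : ∀ j : ℕ, (A ^ (j + 1)).toEuclideanLin b = (A ^ (j + 1)).toEuclideanLin bR := by
    intro j
    rw [hpow j b, hpow j bR, hTb]
  have e1 : (Krylov A b (k + 1)).map T = (Krylov A bR (k + 1)).map T := by
    rw [hmap, hmap]
    congr 1
    ext w
    constructor
    · rintro ⟨j, hj, rfl⟩; exact ⟨j, hj, hbbR j⟩
    · rintro ⟨j, hj, rfl⟩; exact ⟨j, hj, (hbbR j).symm⟩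
  have e2 : (Krylov A bR (k + 1)).map T = (Krylov A bR k).map T := by rw [hgrade]
  -- Krylov spaces of bR sit inside range T
  have hKrange : ∀ i : ℕ, Krylov A bR i ≤ LinearMap.range T := by
    intro i
    rw [Krylov, Submodule.span_le]
    rintro w ⟨j, hj, rfl⟩
    obtain ⟨c, hc⟩ := hbR
    rw [← hc, ← hpow, hpow']
    exact ⟨(A ^ j).toEuclideanLin c, rfl⟩
  -- T is injective on range T
  have hinj : ∀ x ∈ LinearMap.range T, T x = 0 → x = 0 := by
    intro x hx hx0
    have : x ∈ LinearMap.ker T := LinearMap.mem_ker.mpr hx0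
    rw [hker] at this
    exact (Submodule.mem_bot ℝ).mp
      ((Submodule.orthogonal_disjoint (LinearMap.range T)).le_bot ⟨hx, this⟩)
  -- hence map preserves finrank on submodules of range T
  have hfr : ∀ S : Submodule ℝ (EuclideanSpace ℝ (Fin m)), S ≤ LinearMap.range T →
      Module.finrank ℝ (S.map T) = Module.finrank ℝ S := by
    intro S hS
    have hk : LinearMap.ker (T.domRestrict S) = ⊥ := by
      rw [LinearMap.ker_eq_bot']
      rintro ⟨x, hx⟩ h
      exact Subtype.ext (by simpa using hinj x (hS hx) (by simpa using h))
    have hr : LinearMap.range (T.domRestrict S) = S.map T := by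
      rw [LinearMap.range_domRestrict]
    have := LinearMap.finrank_range_add_finrank_ker (T.domRestrict S)
    rw [hr, hk, finrank_bot, add_zero] at this
    exact this
  -- finrank of Krylov bR j = j for j ≤ k
  have hmono : ∀ (v : EuclideanSpace ℝ (Fin m)) (i : ℕ), Krylov A v i ≤ Krylov A v (i + 1) := by
    intro v i
    apply Submodule.span_mono
    rintro w ⟨j, hj, rfl⟩
    exact ⟨j, Nat.lt_succ_of_lt hj, rfl⟩
  have hsucc : ∀ (v : EuclideanSpace ℝ (Fin m)) (i : ℕ),
      Krylov A v (i + 1) = Krylov A v i ⊔ (ℝ ∙ (A ^ i).toEuclideanLin v) := by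
    intro v i
    rw [Krylov, Krylov, ← Submodule.span_union]
    congr 1
    ext w
    constructor
    · rintro ⟨j, hj, rfl⟩
      rcases Nat.lt_succ_iff_lt_or_eq.mp hj with h | rfl
      · exact Or.inl ⟨j, h, rfl⟩
      · exact Or.inr rfl
    · rintro (⟨j, hj, rfl⟩ | h)
      · exact ⟨j, Nat.lt_succ_of_lt hj, rfl⟩
      · exact ⟨i, Nat.lt_succ_self i, h⟩
  have hdim : ∀ j ≤ k, Module.finrank ℝ (Krylov A bR j) = j := by
    intro j hj
    induction j with
    | zero =>
      have : Krylov A bR 0 = ⊥ := by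
        rw [Krylov]
        convert Submodule.span_empty
        ext w
        simp
      rw [this, finrank_bot]
    | succ n ih =>
      have ihn := ih (Nat.le_of_succ_le hj)
      have hlt : Krylov A bR n < Krylov A bR (n + 1) :=
        lt_of_le_of_ne (hmono bR n) (Ne.symm (hmin n (Nat.lt_of_succ_le hj)))
      have h1 : n < Module.finrank ℝ (Krylov A bR (n + 1)) := by
        have := Submodule.finrank_lt_finrank_of_lt hlt
        omega
      have h2 : Module.finrank ℝ (Krylov A bR (n + 1)) ≤ n + 1 := by
        rw [hsucc]
        calc Module.finrank ℝ ↥(Krylov A bR n ⊔ ℝ ∙ (A ^ n).toEuclideanLin bR)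
            ≤ Module.finrank ℝ (Krylov A bR n)
              + Module.finrank ℝ (ℝ ∙ (A ^ n).toEuclideanLin bR) :=
              Submodule.finrank_add_le_finrank_add_finrank _ _
          _ ≤ n + 1 := by
              rw [ihn]
              gcongr
              simpa using finrank_span_le_card ({(A ^ n).toEuclideanLin bR} : Set _)
      omega
  rw [e1, e2, hfr _ (hKrange k), hdim k le_rfl]
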